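/- Let λ ∈ ℝ with λ ∉ 𝒩, set μ_j := −j⁴π⁴ + λ j²π², and assume μ_j ≠ 0 for every positive integer j. Let (e_j)_{j≥1} be an absolutely summable sequence of complex numbers such that ∑_{j≥1} e_j · μ_j^{−p} = 0 for every integer p ≥ 0. Then e_j = 0 for every positive integer j. -/

import Mathlib

open Real Filter Topology

/-- If λ ∉ 𝒩, μ_j := −j⁴π⁴ + λj²π² are all nonzero, and (e_j) ∈ ℓ¹ satisfies
∑_j e_j μ_j^{−p} = 0 for every integer p ≥ 0, then all e_j vanish. -/
theorem stmt6 (lam : ℝ)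
    (hlam : lam ∉ {x : ℝ | ∃ j k : ℕ+, j ≠ k ∧
      x = (j : ℝ) ^ 2 * π ^ 2 + (k : ℝ) ^ 2 * π ^ 2})
    (hmu : ∀ j : ℕ+, (-(j : ℝ) ^ 4 * π ^ 4 + lam * (j : ℝ) ^ 2 * π ^ 2) ≠ 0)
    (e : ℕ+ → ℂ)
    (he : Summable (fun j : ℕ+ => ‖e j‖))
    (hzero : ∀ p : ℕ,
      (∑' j : ℕ+, e j *
        (((-(j : ℝ) ^ 4 * π ^ 4 + lam * (j : ℝ) ^ 2 * π ^ 2 : ℝ) : ℂ))⁻¹ ^ p) = 0) :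
    ∀ j : ℕ+, e j = 0 := by
  obtain ⟨μ, hμdef⟩ : ∃ μ : ℕ+ → ℝ, ∀ j : ℕ+,
      μ j = -(j : ℝ) ^ 4 * π ^ 4 + lam * (j : ℝ) ^ 2 * π ^ 2 := ⟨_, fun j => rfl⟩
  simp_rw [← hμdef] at hzero hmu
  set ν : ℕ+ → ℝ := fun j => (μ j)⁻¹ with hνdef
  have hπ : (0:ℝ) < π := Real.pi_pos
  -- injectivity of ν
  have hνinj : ∀ a b : ℕ+, ν a = ν b → a = b := by
    intro a b hab
    have hμab : μ a = μ b := inv_injective hab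
    by_contra hne
    apply hlam
    refine ⟨a, b, hne, ?_⟩
    have ha0 : (0:ℝ) < (a:ℝ) := by exact_mod_cast a.pos
    have hb0 : (0:ℝ) < (b:ℝ) := by exact_mod_cast b.pos
    have hab2 : (a:ℝ)^2 - (b:ℝ)^2 ≠ 0 := by
      rcases lt_or_gt_of_ne hne with h | h
      · have h' : (a:ℝ) < b := by exact_mod_cast h
        have : (a:ℝ)^2 < (b:ℝ)^2 := by nlinarith
        intro hcon; nlinarith
      · have h' : (b:ℝ) < a := by exact_mod_cast h
        have : (b:ℝ)^2 < (a:ℝ)^2 := by nlinarith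
        intro hcon; nlinarith
    rw [hμdef a, hμdef b] at hμab
    have key : (lam - ((a:ℝ)^2*π^2 + (b:ℝ)^2*π^2)) * (((a:ℝ)^2 - (b:ℝ)^2) * π^2) = 0 := by
      linear_combination hμab
    rcases mul_eq_zero.1 key with h | h
    · linarith [sub_eq_zero.1 h]
    · exact absurd h (mul_ne_zero hab2 (by positivity))
  -- bound on |ν|
  have hbig : ∀ j : ℕ+, ¬ ((j:ℝ)^2*π^2 < |lam| + 1) → |ν j| ≤ 1 := by
    intro j hj
    push_neg at hj
    have hμj : 1 ≤ |μ j| := by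
      have hrw : μ j = (j:ℝ)^2*π^2 * (lam - (j:ℝ)^2*π^2) := by rw [hμdef]; ring
      rw [hrw, abs_mul]
      have h1 : (1:ℝ) ≤ |lam - (j:ℝ)^2*π^2| := by
        have := le_abs_self lam
        have := neg_abs_le lam
        have := le_abs_self ((j:ℝ)^2*π^2 - lam)
        rw [abs_sub_comm]
        nlinarith
      have h2 : |(j:ℝ)^2*π^2| = (j:ℝ)^2*π^2 := abs_of_pos (by positivity)
      have h3 : (0:ℝ) ≤ |lam| := abs_nonneg lam
      nlinarith
    have : |ν j| = |μ j|⁻¹ := by rw [hνdef]; exact abs_inv _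
    rw [this]
    have h0 : (0:ℝ) < |μ j| := lt_of_lt_of_le one_pos hμj
    rw [inv_le_one_iff₀]
    right; exact hμj
  have hfin : ({j : ℕ+ | (j:ℝ)^2*π^2 < |lam| + 1}).Finite := by
    have hsub : {j : ℕ+ | (j:ℝ)^2*π^2 < |lam| + 1} ⊆
        (fun j : ℕ+ => (j:ℕ)) ⁻¹' (Set.Iio ⌈|lam| + 1⌉₊) := by
      intro j hj
      simp only [Set.mem_setOf_eq] at hj
      simp only [Set.mem_preimage, Set.mem_Iio]
      rw [Nat.lt_ceil]
      have h1 : (1:ℝ) ≤ (j:ℝ) := by exact_mod_cast j.one_le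
      have hπ3 : (3:ℝ) < π := Real.pi_gt_three
      push_cast
      by_contra hcon
      push_neg at hcon
      have h9 : (9:ℝ) < π^2 := by nlinarith
      have hj1 : (j:ℝ) ≤ (j:ℝ)^2 := by nlinarith
      have habs : (0:ℝ) ≤ |lam| := abs_nonneg lam
      nlinarith [mul_le_mul_of_nonneg_left (le_of_lt h9) (sq_nonneg (j:ℝ))]
    exact ((Set.finite_Iio _).preimage
      (Set.injOn_of_injective (fun a b h => PNat.coe_injective h))).subset hsub
  obtain ⟨m, hm⟩ := ((hfin.image (fun j => |ν j|)).bddAbove)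
  set M : ℝ := max 1 m with hMdef
  have hM1 : (1:ℝ) ≤ M := le_max_left _ _
  have hM0 : (0:ℝ) ≤ M := le_trans zero_le_one hM1
  have hMb : ∀ j : ℕ+, |ν j| ≤ M := by
    intro j
    by_cases hj : (j:ℝ)^2*π^2 < |lam| + 1
    · exact le_trans (hm (Set.mem_image_of_mem _ hj)) (le_max_right _ _)
    · exact le_trans (hbig j hj) hM1
  -- moments in terms of ν
  have hmom : ∀ p : ℕ, ∑' j : ℕ+, e j * ((ν j : ℝ):ℂ)^p = 0 := by
    intro p
    have hrw : ∀ j : ℕ+, ((ν j : ℝ):ℂ) = (((μ j : ℝ):ℂ))⁻¹ := by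
      intro j; rw [hνdef]; push_cast; ring
    simp_rw [hrw]
    exact hzero p
  have hsummand : ∀ p : ℕ, Summable (fun j : ℕ+ => e j * ((ν j : ℝ):ℂ)^p) := by
    intro p
    apply Summable.of_norm
    apply Summable.of_nonneg_of_le (fun j => norm_nonneg _) ?_ (he.mul_right (M^p))
    intro j
    rw [norm_mul, norm_pow, Complex.norm_real, Real.norm_eq_abs]
    have := pow_le_pow_left₀ (abs_nonneg (ν j)) (hMb j) p
    exact mul_le_mul_of_nonneg_left this (norm_nonneg _)
  -- vanishing of polynomial moments
  have hcomb : ∀ (n : ℕ) (c : ℕ → ℝ),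
      ∑' j : ℕ+, e j * ((∑ i ∈ Finset.range n, c i * ν j ^ i : ℝ) : ℂ) = 0 := by
    intro n c
    have h1 : ∀ j : ℕ+, e j * ((∑ i ∈ Finset.range n, c i * ν j ^ i : ℝ) : ℂ)
        = ∑ i ∈ Finset.range n, (c i : ℂ) * (e j * ((ν j : ℝ):ℂ)^i) := by
      intro j
      push_cast
      rw [Finset.mul_sum]
      refine Finset.sum_congr rfl fun i _ => by ring
    simp_rw [h1]
    rw [Summable.tsum_finsetSum (fun i _ => (hsummand i).mul_left _)]
    refine Finset.sum_eq_zero fun i _ => ?_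
    rw [tsum_mul_left, hmom i, mul_zero]
  have hpoly : ∀ P : Polynomial ℝ, ∑' j : ℕ+, e j * ((P.eval (ν j) : ℝ):ℂ) = 0 := by
    intro P
    have h1 : ∀ j : ℕ+, P.eval (ν j)
        = ∑ i ∈ Finset.range (P.natDegree+1), P.coeff i * ν j ^ i :=
      fun j => Polynomial.eval_eq_sum_range _
    simp_rw [h1]
    exact hcomb _ _
  -- the bump polynomial
  intro k
  set Q : Polynomial ℝ := Polynomial.C 1 - Polynomial.C (((2*M+1)^2)⁻¹) *
      (Polynomial.X - Polynomial.C (ν k))^2 with hQdef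
  have hQeval : ∀ x : ℝ, Q.eval x = 1 - ((2*M+1)^2)⁻¹ * (x - ν k)^2 := by
    intro x; simp [hQdef]
  have hc0 : (0:ℝ) < (2*M+1)^2 := by positivity
  have hQk : Q.eval (ν k) = 1 := by rw [hQeval]; simp
  have hle : ∀ j : ℕ+, |Q.eval (ν j)| ≤ 1 := by
    intro j
    have hs : (ν j - ν k)^2 ≤ (2*M+1)^2 := by
      have h1 := abs_le.1 (hMb j)
      have h2 := abs_le.1 (hMb k)
      nlinarith [h1.1, h1.2, h2.1, h2.2]
    have ht1 : ((2*M+1)^2)⁻¹ * (ν j - ν k)^2 ≤ 1 := by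
      have := (div_le_one hc0).2 hs
      rwa [div_eq_inv_mul] at this
    have ht0 : (0:ℝ) ≤ ((2*M+1)^2)⁻¹ * (ν j - ν k)^2 := by positivity
    rw [hQeval, abs_le]
    constructor <;> nlinarith
  have hlt : ∀ j : ℕ+, j ≠ k → |Q.eval (ν j)| < 1 := by
    intro j hj
    have hne : ν j ≠ ν k := fun h => hj (hνinj j k h)
    have hs : (ν j - ν k)^2 ≤ (2*M+1)^2 := by
      have h1 := abs_le.1 (hMb j)
      have h2 := abs_le.1 (hMb k)
      nlinarith [h1.1, h1.2, h2.1, h2.2]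
    have ht1 : ((2*M+1)^2)⁻¹ * (ν j - ν k)^2 ≤ 1 := by
      have := (div_le_one hc0).2 hs
      rwa [div_eq_inv_mul] at this
    have ht0 : (0:ℝ) < ((2*M+1)^2)⁻¹ * (ν j - ν k)^2 := by
      have hs0 : (0:ℝ) < (ν j - ν k)^2 :=
        lt_of_le_of_ne (sq_nonneg _) (Ne.symm (pow_ne_zero 2 (sub_ne_zero.2 hne)))
      exact mul_pos (inv_pos.2 hc0) hs0
    rw [hQeval, abs_lt]
    constructor <;> nlinarith
  -- all powers have vanishing sum
  have hconst : ∀ n : ℕ, ∑' j : ℕ+, e j * (((Q.eval (ν j))^n : ℝ):ℂ) = 0 := by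
    intro n
    have := hpoly (Q^n)
    simpa [Polynomial.eval_pow] using this
  -- dominated convergence
  have htend : Tendsto (fun n : ℕ => ∑' j : ℕ+, e j * (((Q.eval (ν j))^n : ℝ):ℂ))
      atTop (𝓝 (∑' j : ℕ+, if j = k then e k else 0)) := by
    apply tendsto_tsum_of_dominated_convergence he
    · intro j
      by_cases hj : j = k
      · subst hj
        simp only [if_pos rfl, hQk]
        simpa using (tendsto_const_nhds : Tendsto (fun _ : ℕ => e j) atTop (𝓝 (e j)))
      · simp only [if_neg hj]
        have h0 : Tendsto (fun n : ℕ => (Q.eval (ν j))^n) atTop (𝓝 0) :=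
          tendsto_pow_atTop_nhds_zero_of_abs_lt_one (hlt j hj)
        have h1 : Tendsto (fun n : ℕ => (((Q.eval (ν j))^n : ℝ):ℂ)) atTop (𝓝 0) := by
          have := (Complex.continuous_ofReal.tendsto 0).comp h0
          simpa [Function.comp_def, Complex.ofReal_pow] using this
        simpa using h1.const_mul (e j)
    · filter_upwards with n
      intro j
      rw [norm_mul, Complex.norm_real, Real.norm_eq_abs, abs_pow]
      have h1 : |Q.eval (ν j)|^n ≤ 1 := pow_le_one₀ (abs_nonneg _) (hle j)
      calc ‖e j‖ * |Q.eval (ν j)|^n ≤ ‖e j‖ * 1 :=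
            mul_le_mul_of_nonneg_left h1 (norm_nonneg _)
        _ = ‖e j‖ := mul_one _
  have h2 : (∑' j : ℕ+, if j = k then e k else 0) = e k := tsum_ite_eq k (fun _ => e k)
  have h3 : Tendsto (fun n : ℕ => ∑' j : ℕ+, e j * (((Q.eval (ν j))^n : ℝ):ℂ))
      atTop (𝓝 0) := by
    simp_rw [hconst]
    exact tendsto_const_nhds
  have h4 := tendsto_nhds_unique htend h3
  rw [h2] at h4
  exact h4
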